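/- Let T be an invertible N×N real matrix having at least one (possibly complex) eigenvalue of modulus different from 1, let r > 0, let B be the closed ball of radius r around the origin in ℝ^N with indicator function χ, and let μ be a real-valued functional on bounded measurable functions ℝ^N → ℝ satisfying: (i) semi-locality, μ(f) = μ(χ · f) for all f; (ii) invariance, μ(f ∘ T⁻¹) = μ(f) for all f; (iii) continuity, whenever (fₙ) is a uniformly bounded sequence of measurable functions supported in B with ∫ |fₙ| → 0, then μ(fₙ) → μ(0). Then μ is constant: μ(f) = μ(0) for every bounded measurable f. -/

import Mathlib

open MeasureTheory Matrix Filter Polynomial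


lemma left_eigvec {N : ℕ} (A : Matrix (Fin N) (Fin N) ℂ) (z : ℂ)
    (h : A.charpoly.IsRoot z) : ∃ v : Fin N → ℂ, v ≠ 0 ∧ v ᵥ* A = z • v := by
  have hdet : (z • (1 : Matrix (Fin N) (Fin N) ℂ) - A).det = 0 := by
    have h1 : eval z A.charmatrix.det = 0 := h
    have h2 : ((evalRingHom z).mapMatrix A.charmatrix).det = 0 := by
      rw [← RingHom.map_det]; exact h1
    convert h2 using 2
    ext i j
    by_cases hij : i = j <;>
      simp [hij, charmatrix_apply_eq, charmatrix_apply_ne, Matrix.one_apply, Matrix.smul_apply,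
        Matrix.sub_apply, RingHom.mapMatrix_apply]
  obtain ⟨v, hv0, hv⟩ := (Matrix.exists_vecMul_eq_zero_iff.2 hdet)
  refine ⟨v, hv0, ?_⟩
  rw [Matrix.vecMul_sub] at hv
  have h2 : v ᵥ* (z • (1 : Matrix (Fin N) (Fin N) ℂ)) = z • v := by
    ext i
    simp [Matrix.vecMul, dotProduct, Matrix.smul_apply, Matrix.one_apply, mul_comm,
      Finset.sum_ite_eq, mul_ite]
  rw [h2] at hv
  exact (sub_eq_zero.mp hv).symm


lemma slab_vol {N : ℕ} (r : ℝ) (a : Fin N → ℝ) (ha : a ≠ 0) (ε : ℕ → ℝ)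
    (hε : Tendsto ε atTop (nhds 0)) :
    Tendsto (fun n => (volume (Metric.closedBall (0 : Fin N → ℝ) r ∩
      {x | |a ⬝ᵥ x| ≤ ε n})).toReal) atTop (nhds 0) := by
  have hφc : Continuous fun x : Fin N → ℝ => a ⬝ᵥ x := by
    unfold dotProduct
    exact continuous_finset_sum _ fun i _ => continuous_const.mul (continuous_apply i)
  set A : ℕ → Set (Fin N → ℝ) := fun k =>
    Metric.closedBall (0 : Fin N → ℝ) r ∩ {x | |a ⬝ᵥ x| ≤ ((k : ℝ) + 1)⁻¹} with hA
  have hAmeas : ∀ k, MeasurableSet (A k) := fun k =>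
    Metric.isClosed_closedBall.measurableSet.inter
      ((isClosed_le (continuous_abs.comp hφc) continuous_const).measurableSet)
  have hAanti : Antitone A := by
    intro k l hkl
    refine Set.inter_subset_inter_right _ (fun x hx => ?_)
    simp only [Set.mem_setOf_eq] at hx ⊢
    refine le_trans hx (inv_anti₀ (by positivity) ?_)
    have : (k : ℝ) ≤ l := Nat.cast_le.2 hkl
    linarith
  have hAfin : volume (A 0) ≠ ⊤ := by
    refine ne_of_lt (lt_of_le_of_lt (measure_mono Set.inter_subset_left) ?_)
    exact (Metric.isBounded_closedBall).measure_lt_top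
  have hker : volume {x : Fin N → ℝ | a ⬝ᵥ x = 0} = 0 := by
    set φL : (Fin N → ℝ) →ₗ[ℝ] ℝ :=
      { toFun := fun x => a ⬝ᵥ x
        map_add' := fun x y => dotProduct_add a x y
        map_smul' := fun c x => by simp [dotProduct_smul] }
    have hne : LinearMap.ker φL ≠ ⊤ := by
      intro h
      apply ha
      have h2 : φL a = 0 := by
        rw [LinearMap.ker_eq_top] at h; simp [h]
      have : a ⬝ᵥ a = 0 := h2
      funext i
      have h3 := (Finset.sum_eq_zero_iff_of_nonneg (fun j _ => mul_self_nonneg (a j))).1 this i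
        (Finset.mem_univ i)
      show a i = 0
      nlinarith [h3]
    have := MeasureTheory.Measure.addHaar_submodule
      (volume : Measure (Fin N → ℝ)) (LinearMap.ker φL) hne
    convert this using 2
    ext x; simp [φL]
  have hInter : (⋂ k, A k) = Metric.closedBall (0 : Fin N → ℝ) r ∩ {x | a ⬝ᵥ x = 0} := by
    ext x
    simp only [Set.mem_iInter, Set.mem_inter_iff, Set.mem_setOf_eq, hA]
    constructor
    · rintro h
      refine ⟨(h 0).1, ?_⟩
      by_contra habs
      obtain ⟨k, hk⟩ := exists_nat_gt (|a ⬝ᵥ x|)⁻¹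
      have h1 : (0:ℝ) < |a ⬝ᵥ x| := abs_pos.2 habs
      have h2 := (h k).2
      have : ((k:ℝ)+1)⁻¹ < |a ⬝ᵥ x| := by
        rw [inv_lt_comm₀ (by positivity) h1] at *
        · linarith
      linarith
    · rintro ⟨h1, h2⟩ k
      exact ⟨h1, by rw [h2]; simp; positivity⟩
  have htendA : Tendsto (fun k => volume (A k)) atTop (nhds 0) := by
    have := MeasureTheory.tendsto_measure_iInter_atTop (μ := volume) (s := A)
      (fun k => (hAmeas k).nullMeasurableSet) hAanti ⟨0, hAfin⟩
    rw [hInter] at this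
    have hz : volume (Metric.closedBall (0 : Fin N → ℝ) r ∩ {x | a ⬝ᵥ x = 0}) = 0 :=
      measure_mono_null Set.inter_subset_right hker
    rwa [hz] at this
  have hENN : Tendsto (fun n => volume (Metric.closedBall (0 : Fin N → ℝ) r ∩
      {x | |a ⬝ᵥ x| ≤ ε n})) atTop (nhds 0) := by
    rw [ENNReal.tendsto_atTop_zero]
    intro e he
    rcases (ENNReal.tendsto_atTop_zero.mp htendA) e he with ⟨k, hk⟩
    have hev : ∀ᶠ n in atTop, ε n ≤ ((k : ℝ) + 1)⁻¹ :=
      hε.eventually (eventually_le_nhds (show (0:ℝ) < ((k:ℝ)+1)⁻¹ by positivity))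
    obtain ⟨M, hM⟩ := eventually_atTop.mp hev
    refine ⟨M, fun n hn => le_trans (measure_mono ?_) (hk k le_rfl)⟩
    exact Set.inter_subset_inter_right _ (fun x hx => le_trans hx (hM n hn))
  have := (ENNReal.tendsto_toReal (show (0:ENNReal) ≠ ⊤ by simp)).comp hENN
  simpa [Function.comp_def] using this


lemma vecMul_map_re {N : ℕ} (M : Matrix (Fin N) (Fin N) ℝ) (u : Fin N → ℂ) (i : Fin N) :
    ((fun j => (u j).re) ᵥ* M) i = ((u ᵥ* M.map (algebraMap ℝ ℂ)) i).re := by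
  simp only [Matrix.vecMul, dotProduct, Matrix.map_apply, Complex.re_sum,
    Complex.mul_re, Complex.ofReal_re, Complex.ofReal_im]
  simp

lemma vecMul_map_im {N : ℕ} (M : Matrix (Fin N) (Fin N) ℝ) (u : Fin N → ℂ) (i : Fin N) :
    ((fun j => (u j).im) ᵥ* M) i = ((u ᵥ* M.map (algebraMap ℝ ℂ)) i).im := by
  simp only [Matrix.vecMul, dotProduct, Matrix.map_apply, Complex.im_sum,
    Complex.mul_im, Complex.ofReal_re, Complex.ofReal_im]
  simp

lemma real_decay {N : ℕ} (W : Matrix (Fin N) (Fin N) ℝ) (w : Fin N → ℂ) (hw : w ≠ 0)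
    (lam : ℂ) (hlam : ‖lam‖ < 1)
    (h : w ᵥ* (W.map (algebraMap ℝ ℂ)) = lam • w) :
    ∃ a : Fin N → ℝ, a ≠ 0 ∧
      Tendsto (fun n => ∑ i, |(a ᵥ* (W ^ n)) i|) atTop (nhds 0) := by
  set A := W.map (algebraMap ℝ ℂ) with hA
  have hAp : ∀ n : ℕ, (W ^ n).map (algebraMap ℝ ℂ) = A ^ n := by
    intro n
    have := map_pow ((algebraMap ℝ ℂ).mapMatrix) W n
    simpa [RingHom.mapMatrix_apply, hA] using this
  have hpow : ∀ n : ℕ, w ᵥ* (A ^ n) = lam ^ n • w := by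
    intro n
    induction n with
    | zero => simp
    | succ n ih =>
      rw [pow_succ, ← Matrix.vecMul_vecMul, ih, Matrix.smul_vecMul, h, pow_succ, smul_smul,
        mul_comm]
  -- bound each candidate
  have hbound : ∀ (c : Fin N → ℝ), (∀ (n : ℕ) (i : Fin N),
      |(c ᵥ* (W ^ n)) i| ≤ ‖lam‖ ^ n * ‖w i‖) →
      Tendsto (fun n => ∑ i, |(c ᵥ* (W ^ n)) i|) atTop (nhds 0) := by
    intro c hc
    have hup : Tendsto (fun n => ‖lam‖ ^ n * ∑ i, ‖w i‖)
        atTop (nhds 0) := by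
      have := (tendsto_pow_atTop_nhds_zero_of_lt_one (norm_nonneg lam) hlam).mul_const
        (∑ i, ‖w i‖)
      simpa using this
    refine tendsto_of_tendsto_of_tendsto_of_le_of_le tendsto_const_nhds hup ?_ ?_
    · exact fun n => Finset.sum_nonneg fun i _ => abs_nonneg _
    · intro n
      simp only []
      rw [Finset.mul_sum]
      exact Finset.sum_le_sum fun i _ => hc n i
  have hre : ∀ (n : ℕ) (i : Fin N),
      |((fun j => (w j).re) ᵥ* (W ^ n)) i| ≤ ‖lam‖ ^ n * ‖w i‖ := by
    intro n i
    rw [vecMul_map_re, hAp n, hpow n]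
    calc |((lam ^ n • w) i).re| ≤ ‖(lam ^ n • w) i‖ := Complex.abs_re_le_norm _
      _ = ‖lam‖ ^ n * ‖w i‖ := by
          simp [Pi.smul_apply, smul_eq_mul, _root_.map_mul, _root_.map_pow]
  have him : ∀ (n : ℕ) (i : Fin N),
      |((fun j => (w j).im) ᵥ* (W ^ n)) i| ≤ ‖lam‖ ^ n * ‖w i‖ := by
    intro n i
    rw [vecMul_map_im, hAp n, hpow n]
    calc |((lam ^ n • w) i).im| ≤ ‖(lam ^ n • w) i‖ := Complex.abs_im_le_norm _
      _ = ‖lam‖ ^ n * ‖w i‖ := by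
          simp [Pi.smul_apply, smul_eq_mul, _root_.map_mul, _root_.map_pow]
  by_cases hre0 : (fun j => (w j).re) = 0
  · refine ⟨fun j => (w j).im, ?_, hbound _ him⟩
    intro h0
    apply hw
    funext j
    have h1 : (w j).re = 0 := congrFun hre0 j
    have h2 : (w j).im = 0 := congrFun h0 j
    exact Complex.ext h1 h2
  · exact ⟨fun j => (w j).re, hre0, hbound _ hre⟩


lemma mulVec_measurable {N : ℕ} (M : Matrix (Fin N) (Fin N) ℝ) :
    Measurable fun x : Fin N → ℝ => M *ᵥ x := by
  have : Continuous fun x : Fin N → ℝ => M.mulVecLin x :=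
    M.mulVecLin.continuous_of_finiteDimensional
  simpa [Matrix.mulVecLin_apply] using this.measurable

lemma key_lemma {N : ℕ} (r : ℝ) (hr : 0 < r)
    (U : Matrix (Fin N) (Fin N) ℝ) (hU : IsUnit U)
    (a : Fin N → ℝ) (ha : a ≠ 0)
    (hdecay : Tendsto (fun n => ∑ i, |(a ᵥ* (U ^ n)) i|) atTop (nhds 0))
    (μ : ((Fin N → ℝ) → ℝ) → ℝ)
    (hsl : ∀ f : (Fin N → ℝ) → ℝ, Measurable f → (∃ C, ∀ x, |f x| ≤ C) →
      μ f = μ ((Metric.closedBall (0 : Fin N → ℝ) r).indicator f))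
    (hinvn : ∀ (n : ℕ) (h : (Fin N → ℝ) → ℝ), Measurable h → (∃ C, ∀ x, |h x| ≤ C) →
      μ (fun x => h ((U ^ n)⁻¹ *ᵥ x)) = μ h)
    (hcont : ∀ (F : ℕ → (Fin N → ℝ) → ℝ) (C : ℝ),
      (∀ n, Measurable (F n)) →
      (∀ n x, |F n x| ≤ C) →
      (∀ n, Function.support (F n) ⊆ Metric.closedBall (0 : Fin N → ℝ) r) →
      Filter.Tendsto (fun n => ∫ x, |F n x|) Filter.atTop (nhds 0) →
      Filter.Tendsto (fun n => μ (F n)) Filter.atTop (nhds (μ 0))) :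
    ∀ f : (Fin N → ℝ) → ℝ, Measurable f → (∃ C, ∀ x, |f x| ≤ C) → μ f = μ 0 := by
  intro f hf ⟨C, hC⟩
  set B : Set (Fin N → ℝ) := Metric.closedBall (0 : Fin N → ℝ) r with hB
  have hBmeas : MeasurableSet B := Metric.isClosed_closedBall.measurableSet
  set C' : ℝ := max C 0 with hC'
  have hC'0 : 0 ≤ C' := le_max_right _ _
  set g : (Fin N → ℝ) → ℝ := B.indicator f with hg
  have hgmeas : Measurable g := hf.indicator hBmeas
  have hgb : ∀ x, |g x| ≤ C' := by
    intro x
    by_cases hx : x ∈ B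
    · simp only [hg, Set.indicator_of_mem hx]; exact le_trans (hC x) (le_max_left _ _)
    · simp [hg, Set.indicator_of_notMem hx, hC'0]
  -- F n
  set F : ℕ → (Fin N → ℝ) → ℝ := fun n => B.indicator (fun x => g ((U ^ n)⁻¹ *ᵥ x)) with hF
  have hUn : ∀ n : ℕ, IsUnit (U ^ n) := fun n => hU.pow n
  have hgcomp_meas : ∀ n, Measurable fun x => g ((U ^ n)⁻¹ *ᵥ x) :=
    fun n => hgmeas.comp (mulVec_measurable _)
  have hFmeas : ∀ n, Measurable (F n) := fun n => (hgcomp_meas n).indicator hBmeas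
  have hFb : ∀ n x, |F n x| ≤ C' := by
    intro n x
    by_cases hx : x ∈ B
    · simp only [hF, Set.indicator_of_mem hx]; exact hgb _
    · simp [hF, Set.indicator_of_notMem hx, hC'0]
  have hFsupp : ∀ n, Function.support (F n) ⊆ B := fun n => Set.support_indicator_subset
  -- μ (F n) = μ f
  have hμF : ∀ n, μ (F n) = μ f := by
    intro n
    have h1 : μ f = μ g := hsl f hf ⟨C, hC⟩
    have h2 : μ (fun x => g ((U ^ n)⁻¹ *ᵥ x)) = μ g := hinvn n g hgmeas ⟨C', hgb⟩
    have h3 : μ (fun x => g ((U ^ n)⁻¹ *ᵥ x)) = μ (F n) :=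
      hsl _ (hgcomp_meas n) ⟨C', fun x => hgb _⟩
    rw [← h3, h2, ← h1]
  -- the good sets
  set ε : ℕ → ℝ := fun n => (∑ i, |(a ᵥ* (U ^ n)) i|) * r with hε
  have hεt : Tendsto ε atTop (nhds 0) := by
    simpa using hdecay.mul_const r
  set S : ℕ → Set (Fin N → ℝ) := fun n => B ∩ {x | |a ⬝ᵥ x| ≤ ε n} with hS
  have hSmeas : ∀ n, MeasurableSet (S n) := by
    intro n
    have hφc : Continuous fun x : Fin N → ℝ => a ⬝ᵥ x := by
      unfold dotProduct
      exact continuous_finset_sum _ fun i _ => continuous_const.mul (continuous_apply i)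
    exact hBmeas.inter ((isClosed_le (continuous_abs.comp hφc) continuous_const).measurableSet)
  -- pointwise bound
  have hptwise : ∀ n x, |F n x| ≤ (S n).indicator (fun _ => C') x := by
    intro n x
    by_cases hx : F n x = 0
    · rw [hx, abs_zero]
      exact Set.indicator_nonneg (fun _ _ => hC'0) x
    · have hxB : x ∈ B := hFsupp n hx
      have hgx : g ((U ^ n)⁻¹ *ᵥ x) ≠ 0 := by
        intro h0
        apply hx
        simp [hF, Set.indicator_of_mem hxB, h0]
      have hyB : (U ^ n)⁻¹ *ᵥ x ∈ B := by
        by_contra hy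
        exact hgx (Set.indicator_of_notMem hy f)
      have hxS : x ∈ S n := by
        refine ⟨hxB, ?_⟩
        have hxy : x = (U ^ n) *ᵥ ((U ^ n)⁻¹ *ᵥ x) := by
          rw [Matrix.mulVec_mulVec, Matrix.mul_nonsing_inv _ ((Matrix.isUnit_iff_isUnit_det _).1 (hUn n)), Matrix.one_mulVec]
        set y := (U ^ n)⁻¹ *ᵥ x with hy
        have hyb : ∀ i, |y i| ≤ r := by
          intro i
          have : ‖y‖ ≤ r := by simpa [hB, Metric.mem_closedBall, dist_zero_right] using hyB
          exact le_trans (norm_le_pi_norm y i) this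
        have : a ⬝ᵥ x = (a ᵥ* (U ^ n)) ⬝ᵥ y := by
          rw [hxy, Matrix.dotProduct_mulVec]
        rw [Set.mem_setOf_eq, this]
        calc |(a ᵥ* (U ^ n)) ⬝ᵥ y| ≤ ∑ i, |(a ᵥ* (U ^ n)) i * y i| :=
              Finset.abs_sum_le_sum_abs _ _
          _ ≤ ∑ i, |(a ᵥ* (U ^ n)) i| * r := by
              refine Finset.sum_le_sum fun i _ => ?_
              rw [abs_mul]
              exact mul_le_mul_of_nonneg_left (hyb i) (abs_nonneg _)
          _ = ε n := by simp only [hε, Finset.sum_mul]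
      rw [Set.indicator_of_mem hxS]
      exact hFb n x
  -- integral bound
  have hIndInt : ∀ n, Integrable ((S n).indicator (fun _ => C')) volume := by
    intro n
    rw [integrable_indicator_iff (hSmeas n)]
    refine integrableOn_const (ne_of_lt ?_)
    exact lt_of_le_of_lt (measure_mono Set.inter_subset_left) Metric.isBounded_closedBall.measure_lt_top
  have hFint : ∀ n, Integrable (fun x => |F n x|) volume := by
    intro n
    refine Integrable.mono' (hIndInt n) ((hFmeas n).abs.aestronglyMeasurable) ?_
    exact Filter.Eventually.of_forall fun x => by
      simpa [abs_abs] using hptwise n x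
  have hIntBound : ∀ n, ∫ x, |F n x| ≤ C' * (volume (S n)).toReal := by
    intro n
    calc ∫ x, |F n x| ≤ ∫ x, (S n).indicator (fun _ => C') x :=
          integral_mono (hFint n) (hIndInt n) (hptwise n)
      _ = (volume (S n)).toReal * C' := by
          rw [integral_indicator_const _ (hSmeas n)]; simp [smul_eq_mul, measureReal_def]
      _ = C' * (volume (S n)).toReal := mul_comm _ _
  have hvol : Tendsto (fun n => (volume (S n)).toReal) atTop (nhds 0) :=
    slab_vol r a ha ε hεt
  have hIto : Tendsto (fun n => ∫ x, |F n x|) atTop (nhds 0) := by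
    have hupper : Tendsto (fun n => C' * (volume (S n)).toReal) atTop (nhds 0) := by
      simpa using hvol.const_mul C'
    refine tendsto_of_tendsto_of_tendsto_of_le_of_le tendsto_const_nhds hupper ?_ ?_
    · exact fun n => integral_nonneg fun x => abs_nonneg _
    · exact fun n => hIntBound n
  have := hcont F C' hFmeas hFb hFsupp hIto
  have h2 : Tendsto (fun n => μ (F n)) atTop (nhds (μ f)) := by
    simp only [hμF]; exact tendsto_const_nhds
  exact tendsto_nhds_unique h2 this


/-- Let `T` be an invertible `N×N` real matrix having at least one
(complex) eigenvalue of modulus different from 1, let `r > 0`, let `B` be the closed ball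
of radius `r` around the origin with indicator `χ`, and let `μ` be a real-valued functional
on bounded measurable functions `ℝ^N → ℝ` satisfying semi-locality (`μ(f) = μ(χ·f)`),
invariance (`μ(f ∘ T⁻¹) = μ(f)`) and the stated continuity property. Then `μ` is constant:
`μ(f) = μ(0)` for every bounded measurable `f`. -/
theorem contracting_direction_implies_trivial_functional {N : ℕ}
    (T : Matrix (Fin N) (Fin N) ℝ) (hT : IsUnit T)
    (heig : ∃ z : ℂ, ((Matrix.charpoly T).map (algebraMap ℝ ℂ)).IsRoot z ∧ ‖z‖ ≠ 1)
    (r : ℝ) (hr : 0 < r)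
    (μ : ((Fin N → ℝ) → ℝ) → ℝ)
    (hsl : ∀ f : (Fin N → ℝ) → ℝ, Measurable f → (∃ C, ∀ x, |f x| ≤ C) →
      μ f = μ ((Metric.closedBall (0 : Fin N → ℝ) r).indicator f))
    (hinv : ∀ f : (Fin N → ℝ) → ℝ, Measurable f → (∃ C, ∀ x, |f x| ≤ C) →
      μ (fun x => f (T⁻¹ *ᵥ x)) = μ f)
    (hcont : ∀ (F : ℕ → (Fin N → ℝ) → ℝ) (C : ℝ),
      (∀ n, Measurable (F n)) →
      (∀ n x, |F n x| ≤ C) →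
      (∀ n, Function.support (F n) ⊆ Metric.closedBall (0 : Fin N → ℝ) r) →
      Filter.Tendsto (fun n => ∫ x, |F n x|) Filter.atTop (nhds 0) →
      Filter.Tendsto (fun n => μ (F n)) Filter.atTop (nhds (μ 0))) :
    ∀ f : (Fin N → ℝ) → ℝ, Measurable f → (∃ C, ∀ x, |f x| ≤ C) → μ f = μ 0 := by
  obtain ⟨z, hz, hz1⟩ := heig
  set A := T.map (algebraMap ℝ ℂ) with hA
  have hzA : A.charpoly.IsRoot z := by rw [hA, Matrix.charpoly_map]; exact hz
  obtain ⟨v, hv0, hv⟩ := left_eigvec A z hzA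
  have hTdet : IsUnit T.det := (Matrix.isUnit_iff_isUnit_det T).1 hT
  have hAmul : ∀ (M₁ M₂ : Matrix (Fin N) (Fin N) ℝ),
      (M₁ * M₂).map (algebraMap ℝ ℂ) = M₁.map (algebraMap ℝ ℂ) * M₂.map (algebraMap ℝ ℂ) :=
    fun M₁ M₂ => Matrix.map_mul
  have hAunit : IsUnit A.det := by
    have : A.det = algebraMap ℝ ℂ T.det := by
      rw [hA, ← RingHom.mapMatrix_apply, ← RingHom.map_det]
    rw [this]
    exact hTdet.map (algebraMap ℝ ℂ)
  have hz0 : z ≠ 0 := by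
    intro h0
    rw [h0, zero_smul] at hv
    have : A.det = 0 := Matrix.exists_vecMul_eq_zero_iff.1 ⟨v, hv0, hv⟩
    rw [this] at hAunit
    exact hAunit.ne_zero rfl
  have hTTinv : T * T⁻¹ = 1 := Matrix.mul_nonsing_inv T hTdet
  -- reverse invariance
  have hinv_rev : ∀ h : (Fin N → ℝ) → ℝ, Measurable h → (∃ C, ∀ x, |h x| ≤ C) →
      μ (fun x => h (T *ᵥ x)) = μ h := by
    rintro h hm ⟨C, hC⟩
    have hm2 : Measurable fun x => h (T *ᵥ x) := hm.comp (mulVec_measurable T)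
    have h1 := hinv (fun x => h (T *ᵥ x)) hm2 ⟨C, fun x => hC _⟩
    have h2 : (fun x => h (T *ᵥ (T⁻¹ *ᵥ x))) = h := by
      funext x; rw [Matrix.mulVec_mulVec, hTTinv, Matrix.one_mulVec]
    rw [h2] at h1
    exact h1.symm
  -- iterated invariances
  have hinvn : ∀ (n : ℕ) (h : (Fin N → ℝ) → ℝ), Measurable h → (∃ C, ∀ x, |h x| ≤ C) →
      μ (fun x => h ((T ^ n)⁻¹ *ᵥ x)) = μ h := by
    intro n
    induction n with
    | zero =>
      rintro h hm hb
      simp [Matrix.one_mulVec]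
    | succ n ih =>
      rintro h hm ⟨C, hC⟩
      have e1 : (T ^ (n + 1))⁻¹ = (T ^ n)⁻¹ * T⁻¹ := by
        rw [pow_succ', Matrix.mul_inv_rev]
      have key : (fun x => h ((T ^ (n + 1))⁻¹ *ᵥ x)) =
          fun x => (fun y => h ((T ^ n)⁻¹ *ᵥ y)) (T⁻¹ *ᵥ x) := by
        funext x; rw [e1, ← Matrix.mulVec_mulVec]
      rw [key]
      have hm2 : Measurable fun y => h ((T ^ n)⁻¹ *ᵥ y) := hm.comp (mulVec_measurable _)
      rw [hinv _ hm2 ⟨C, fun x => hC _⟩]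
      exact ih h hm ⟨C, hC⟩
  have hrevn : ∀ (n : ℕ) (h : (Fin N → ℝ) → ℝ), Measurable h → (∃ C, ∀ x, |h x| ≤ C) →
      μ (fun x => h ((T ^ n) *ᵥ x)) = μ h := by
    intro n
    induction n with
    | zero =>
      rintro h hm hb
      simp [Matrix.one_mulVec]
    | succ n ih =>
      rintro h hm ⟨C, hC⟩
      have key : (fun x => h ((T ^ (n + 1)) *ᵥ x)) =
          fun x => (fun y => h ((T ^ n) *ᵥ y)) (T *ᵥ x) := by
        funext x; rw [pow_succ, ← Matrix.mulVec_mulVec]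
      rw [key]
      have hm2 : Measurable fun y => h ((T ^ n) *ᵥ y) := hm.comp (mulVec_measurable _)
      rw [hinv_rev _ hm2 ⟨C, fun x => hC _⟩]
      exact ih h hm ⟨C, hC⟩
  rcases lt_or_gt_of_ne hz1 with hlt | hgt
  · -- |z| < 1 : use U = T
    obtain ⟨a, ha, hdec⟩ := real_decay T v hv0 z hlt hv
    exact key_lemma r hr T hT a ha hdec μ hsl hinvn hcont
  · -- |z| > 1 : use U = T⁻¹
    have hTinvUnit : IsUnit T⁻¹ := by
      rw [Matrix.isUnit_iff_isUnit_det, Matrix.det_nonsing_inv, Ring.inverse_eq_inv,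
        isUnit_iff_ne_zero]
      exact inv_ne_zero (isUnit_iff_ne_zero.mp hTdet)
    have hmapinv : (T⁻¹).map (algebraMap ℝ ℂ) = A⁻¹ := by
      refine (Matrix.inv_eq_right_inv ?_).symm
      rw [hA, ← hAmul, hTTinv]
      exact Matrix.map_one _ (map_zero _) (map_one _)
    have hvinv : v ᵥ* A⁻¹ = z⁻¹ • v := by
      have h1 : (v ᵥ* A) ᵥ* A⁻¹ = v := by
        rw [Matrix.vecMul_vecMul, Matrix.mul_nonsing_inv _ hAunit, Matrix.vecMul_one]
      rw [hv, Matrix.smul_vecMul] at h1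
      calc v ᵥ* A⁻¹ = z⁻¹ • (z • (v ᵥ* A⁻¹)) := by
            rw [smul_smul, inv_mul_cancel₀ hz0, one_smul]
        _ = z⁻¹ • v := by rw [h1]
    have habs : ‖z⁻¹‖ < 1 := by
      rw [norm_inv]
      exact inv_lt_one_of_one_lt₀ hgt
    obtain ⟨a, ha, hdec⟩ := real_decay T⁻¹ v hv0 z⁻¹ habs (by rw [hmapinv]; exact hvinv)
    have hTninv : ∀ n : ℕ, ((T⁻¹) ^ n)⁻¹ = T ^ n := by
      intro n
      apply Matrix.inv_eq_left_inv
      induction n with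
      | zero => simp
      | succ n ih =>
        rw [pow_succ' T⁻¹, pow_succ T, mul_assoc, ← mul_assoc T T⁻¹, hTTinv, one_mul, ih]
    refine key_lemma r hr T⁻¹ hTinvUnit a ha hdec μ hsl ?_ hcont
    intro n h hm hb
    rw [hTninv n]
    exact hrevn n h hm hb
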